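/- arXiv:2201.09285 — 3 statements merged into one kernel-verified Lean document; each statement's English description precedes it below -/
import Mathlib

section
/- Let n ≥ 1 and let e : Fin n → ℝ with e s ≠ 0 for every s. Define the chain observability matrix O : Matrix (Fin n) (Fin n) ℝ by: O 0 0 = e 0; for k ≥ 1, O k (k-1) = e k and O k k = -(e k); and all other entries zero (this encodes a chain relative position measurement graph in which vehicle 1 measures a landmark with measurement derivative e 0 and vehicle k+1 is measured relative to vehicle k with measurement derivative e k). Then O is invertible and for all indices i, j, the (i,j) entry of (Oᵀ * O)⁻¹ equals ∑_{s ≤ min(i,j)} 1/(e s)². In particular the covariance of vehicle i, the (i,i) entry, equals the sum of 1/(e s)² over the edges s on the path from vehicle i back to the landmark. -/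
open Matrix Finset

/-- Explicit inverse of the chain observability matrix. -/
noncomputable def chainInvAux (n : ℕ) (e : Fin n → ℝ) : Matrix (Fin n) (Fin n) ℝ :=
  Matrix.of fun i s =>
    if (s : ℕ) ≤ (i : ℕ) then (if (s : ℕ) = 0 then (e s)⁻¹ else -(e s)⁻¹) else 0

/-- Theorem 2 of the paper for chain-topology RPMGs (landmark attached to vehicle 1):
the covariance matrix `(Oᵀ O)⁻¹` has `(i,j)` entry `∑_{s ≤ min i j} 1/(e s)²`. -/
theorem chain_covariance_landmark_first
    (n : ℕ) (hn : 1 ≤ n) (e : Fin n → ℝ) (he : ∀ s, e s ≠ 0)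
    (O : Matrix (Fin n) (Fin n) ℝ)
    (hO : ∀ k l : Fin n,
      O k l = if (k : ℕ) = 0 then (if l = k then e k else 0)
        else if (l : ℕ) = (k : ℕ) - 1 then e k
        else if l = k then -(e k) else 0) :
    IsUnit O ∧
    ∀ i j : Fin n,
      (Oᵀ * O)⁻¹ i j
        = ∑ s ∈ Finset.univ.filter (fun s : Fin n => (s : ℕ) ≤ min (i : ℕ) (j : ℕ)),
            1 / (e s) ^ 2 := by
  set B : Matrix (Fin n) (Fin n) ℝ := chainInvAux n e with hBdef
  have hB : ∀ i s : Fin n, B i s =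
      if (s : ℕ) ≤ (i : ℕ) then (if (s : ℕ) = 0 then (e s)⁻¹ else -(e s)⁻¹) else 0 := by
    intro i s; rfl
  have hOB : O * B = 1 := by
    ext k l
    rw [Matrix.mul_apply]
    by_cases hk : (k : ℕ) = 0
    · have hrow : ∀ s : Fin n, O k s * B s l = if s = k then e k * B k l else 0 := by
        intro s
        rw [hO k s]
        simp only [hk, if_true]
        by_cases h : s = k
        · simp [h]
        · simp [h]
      rw [Finset.sum_congr rfl (fun s _ => hrow s), Finset.sum_ite_eq' Finset.univ k]
      simp only [Finset.mem_univ, if_true]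
      rw [hB k l]
      by_cases hl : (l : ℕ) = 0
      · have hlk : l = k := Fin.ext (by omega)
        simp [hlk, hk, Matrix.one_apply, mul_inv_cancel₀ (he k)]
      · have hlk : k ≠ l := fun h => hl (by omega)
        have : ¬ (l : ℕ) ≤ (k : ℕ) := by omega
        simp [this, hlk, Matrix.one_apply]
    · have hk1 : 1 ≤ (k : ℕ) := by omega
      set m : Fin n := ⟨(k : ℕ) - 1, lt_of_le_of_lt (Nat.sub_le _ _) k.isLt⟩ with hm
      have hmk : m ≠ k := by
        intro h
        have := congrArg Fin.val h
        simp [hm] at this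
        omega
      have hrow : ∀ s : Fin n, O k s * B s l =
          (if s = m then e k * B m l else 0) + (if s = k then -(e k) * B k l else 0) := by
        intro s
        rw [hO k s]
        simp only [hk, if_false]
        by_cases h1 : s = m
        · have : (s : ℕ) = (k : ℕ) - 1 := by rw [h1]
          simp [this, h1, hmk, if_neg (h1 ▸ hmk), show (m : ℕ) = (k : ℕ) - 1 from rfl]
        · have : (s : ℕ) ≠ (k : ℕ) - 1 := by
            intro h; exact h1 (Fin.ext h)
          by_cases h2 : s = k
          · subst h2
            simp [show (s : ℕ) ≠ (s : ℕ) - 1 by omega, Ne.symm hmk]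
          · simp [this, h1, h2]
      rw [Finset.sum_congr rfl (fun s _ => hrow s), Finset.sum_add_distrib,
        Finset.sum_ite_eq' Finset.univ m, Finset.sum_ite_eq' Finset.univ k]
      simp only [Finset.mem_univ, if_true]
      rw [hB m l, hB k l]
      rcases lt_trichotomy (l : ℕ) (k : ℕ) with hlt | heq | hgt
      · have h1 : (l : ℕ) ≤ (m : ℕ) := by simp [hm]; omega
        have h2 : (l : ℕ) ≤ (k : ℕ) := by omega
        have hkl : k ≠ l := fun h => by omega
        simp only [h1, h2, if_true]
        simp [Matrix.one_apply, hkl]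
        split_ifs <;> ring
      · have hlk : l = k := Fin.ext heq
        have h1 : ¬ (l : ℕ) ≤ (m : ℕ) := by simp [hm]; omega
        have h2 : (l : ℕ) ≤ (k : ℕ) := by omega
        have hl0 : (l : ℕ) ≠ 0 := by omega
        simp only [h1, h2, hl0, if_true, if_false]
        rw [hlk]
        simp [Matrix.one_apply, mul_inv_cancel₀ (he k)]
      · have h1 : ¬ (l : ℕ) ≤ (m : ℕ) := by simp [hm]; omega
        have h2 : ¬ (l : ℕ) ≤ (k : ℕ) := by omega
        have hkl : k ≠ l := fun h => by omega
        simp [h1, h2, Matrix.one_apply, hkl]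
  have hBO : B * O = 1 := mul_eq_one_comm.mp hOB
  refine ⟨(Matrix.isUnit_iff_isUnit_det O).mpr (Matrix.isUnit_det_of_right_inverse hOB), ?_⟩
  have hinv : (Oᵀ * O)⁻¹ = B * Bᵀ := by
    apply Matrix.inv_eq_right_inv
    calc Oᵀ * O * (B * Bᵀ) = Oᵀ * (O * B) * Bᵀ := by
          rw [Matrix.mul_assoc, Matrix.mul_assoc, Matrix.mul_assoc]
      _ = Oᵀ * Bᵀ := by rw [hOB, Matrix.mul_one]
      _ = (B * O)ᵀ := by rw [Matrix.transpose_mul]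
      _ = 1 := by rw [hBO, Matrix.transpose_one]
  intro i j
  rw [hinv, Matrix.mul_apply, Finset.sum_filter]
  refine Finset.sum_congr rfl (fun s _ => ?_)
  rw [Matrix.transpose_apply, hB i s, hB j s]
  by_cases h1 : (s : ℕ) ≤ (i : ℕ) <;> by_cases h2 : (s : ℕ) ≤ (j : ℕ)
  · have : (s : ℕ) ≤ min (i : ℕ) (j : ℕ) := le_min h1 h2
    simp only [h1, h2, this, if_true]
    by_cases h0 : (s : ℕ) = 0 <;> simp only [h0, if_true, if_false] <;>
      field_simp <;> ring
  · have : ¬ (s : ℕ) ≤ min (i : ℕ) (j : ℕ) := by omega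
    simp [h1, h2, this]
  · have : ¬ (s : ℕ) ≤ min (i : ℕ) (j : ℕ) := by omega
    simp [h1, h2, this]
  · have : ¬ (s : ℕ) ≤ min (i : ℕ) (j : ℕ) := by omega
    simp [h1, h2, this]
end

section
/- Let n ≥ 1 and let e : Fin n → ℝ with e s ≠ 0 for every s. Define O : Matrix (Fin n) (Fin n) ℝ by: for k < n-1, O k k = e k and O k (k+1) = -(e k); O (n-1) (n-1) = e (n-1); and all other entries zero (this encodes a chain relative position measurement graph in which the landmark is connected to the last vehicle n). Then O is invertible and for all indices i, j, the (i,j) entry of (Oᵀ * O)⁻¹ equals ∑_{s ≥ max(i,j)} 1/(e s)². -/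
open Matrix Finset

/-- Theorem 2 of the paper for chain-topology RPMGs with the landmark attached to
the last vehicle: the covariance matrix `(Oᵀ O)⁻¹` has `(i,j)` entry
`∑_{s ≥ max i j} 1/(e s)²`. -/
theorem chain_covariance_landmark_last
    (n : ℕ) (hn : 1 ≤ n) (e : Fin n → ℝ) (he : ∀ s, e s ≠ 0)
    (O : Matrix (Fin n) (Fin n) ℝ)
    (hO : ∀ k l : Fin n,
      O k l = if (k : ℕ) = n - 1 then (if l = k then e k else 0)
        else if l = k then e k
        else if (l : ℕ) = (k : ℕ) + 1 then -(e k) else 0) :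
    IsUnit O ∧
    ∀ i j : Fin n,
      (Oᵀ * O)⁻¹ i j
        = ∑ s ∈ Finset.univ.filter (fun s : Fin n => max (i : ℕ) (j : ℕ) ≤ (s : ℕ)),
            1 / (e s) ^ 2 := by
  set B : Matrix (Fin n) (Fin n) ℝ :=
    fun i j => if i ≤ j then 1 / e j else 0 with hB
  have hBapp : ∀ i j : Fin n, B i j = if (i : ℕ) ≤ (j : ℕ) then 1 / e j else 0 := by
    intro i j; rw [hB]; simp only [Fin.le_def]
  have hOB : O * B = 1 := by
    ext k j
    rw [Matrix.mul_apply]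
    by_cases hk : (k : ℕ) = n - 1
    · have h1 : ∀ l : Fin n, O k l * B l j =
          if l = k then e k * B k j else 0 := by
        intro l
        rw [hO]
        rw [if_pos hk]
        by_cases h : l = k <;> simp [h]
      simp only [h1]
      rw [Finset.sum_ite_eq' Finset.univ k (fun _ => e k * B k j)]
      simp only [Finset.mem_univ, if_pos]
      by_cases h : j = k
      · subst h
        rw [hBapp, if_pos (le_refl _), Matrix.one_apply_eq, mul_one_div, div_self (he _)]
      · have hnk : ¬ ((k : ℕ) ≤ (j : ℕ)) := by
          have := j.isLt
          intro hh
          exact h (Fin.ext (by omega))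
        rw [hBapp, if_neg hnk, Matrix.one_apply_ne (fun hh => h hh.symm)]
        ring
    · have hklt : (k : ℕ) + 1 < n := by have := k.isLt; omega
      set k' : Fin n := ⟨(k : ℕ) + 1, hklt⟩ with hk'
      have hkk' : k ≠ k' := by
        intro h
        have := congrArg Fin.val h
        simp [hk'] at this
      have h1 : ∀ l : Fin n, O k l * B l j =
          (if l = k then e k * B k j else 0) +
          (if l = k' then -(e k) * B k' j else 0) := by
        intro l
        rw [hO, if_neg hk]
        by_cases h : l = k
        · subst h
          rw [if_pos rfl, if_pos rfl, if_neg hkk', add_zero]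
        · rw [if_neg h, if_neg h]
          by_cases h2 : l = k'
          · subst h2
            rw [if_pos rfl, if_pos rfl, zero_add]
          · have hl : (l : ℕ) ≠ (k : ℕ) + 1 := fun hh => h2 (Fin.ext hh)
            rw [if_neg hl, if_neg h2, zero_mul, add_zero]
      simp only [h1, Finset.sum_add_distrib]
      rw [Finset.sum_ite_eq' Finset.univ k (fun _ => e k * B k j),
        Finset.sum_ite_eq' Finset.univ k' (fun _ => -(e k) * B k' j)]
      simp only [Finset.mem_univ, if_pos]
      have hk'j : (k' : ℕ) = (k : ℕ) + 1 := rfl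
      rcases lt_trichotomy (j : ℕ) (k : ℕ) with h | h | h
      · have h3 : k ≠ j := fun hh => by subst hh; omega
        rw [hBapp, hBapp, if_neg (by omega), if_neg (by rw [hk'j]; omega),
          Matrix.one_apply_ne h3]
        ring
      · have hjk : j = k := Fin.ext h
        subst hjk
        rw [hBapp, hBapp, if_pos (le_refl _), if_neg (by rw [hk'j]; omega),
          Matrix.one_apply_eq]
        have hk'jn : ¬ ((k' : ℕ) ≤ (j : ℕ)) := by rw [hk'j]; omega
        field_simp
        rw [mul_zero, neg_zero, add_zero, mul_one]
        exact div_self (he _)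
      · have h3 : k ≠ j := fun hh => by subst hh; omega
        rw [hBapp, hBapp, if_pos (by omega), if_pos (by rw [hk'j]; omega),
          Matrix.one_apply_ne h3]
        ring
  have hBO : B * O = 1 := mul_eq_one_comm.mp hOB
  have hUnit : IsUnit O := ⟨⟨O, B, hOB, hBO⟩, rfl⟩
  refine ⟨hUnit, fun i j => ?_⟩
  have hinv : (Oᵀ * O)⁻¹ = B * Bᵀ := by
    apply Matrix.inv_eq_right_inv
    calc Oᵀ * O * (B * Bᵀ) = Oᵀ * (O * B) * Bᵀ := by
          noncomm_ring
      _ = Oᵀ * Bᵀ := by rw [hOB]; simp [Matrix.mul_assoc]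
      _ = (B * O)ᵀ := by rw [Matrix.transpose_mul]
      _ = 1 := by rw [hBO]; simp
  rw [hinv, Matrix.mul_apply, Finset.sum_filter]
  apply Finset.sum_congr rfl
  intro s _
  rw [Matrix.transpose_apply, hBapp, hBapp]
  by_cases h1 : (i : ℕ) ≤ (s : ℕ) <;> by_cases h2 : (j : ℕ) ≤ (s : ℕ)
  · rw [if_pos h1, if_pos h2, if_pos (max_le h1 h2)]
    rw [div_mul_div_comm, one_mul, sq]
  · rw [if_pos h1, if_neg h2, if_neg (by omega : ¬ max (i:ℕ) (j:ℕ) ≤ (s:ℕ))]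
    ring
  · rw [if_neg h1, if_pos h2, if_neg (by omega : ¬ max (i:ℕ) (j:ℕ) ≤ (s:ℕ))]
    ring
  · rw [if_neg h1, if_neg h2, if_neg (by omega : ¬ max (i:ℕ) (j:ℕ) ≤ (s:ℕ))]
    ring
end

section
/- Let ψ₁ ψ₂ : ℝ and define g : (ℝ × ℝ) × (ℝ × ℝ) → ℝ by g ((x₁, y₁), (x₂, y₂)) = ((x₁ - x₂) * (cos ψ₁ - cos ψ₂) + (y₁ - y₂) * (sin ψ₁ - sin ψ₂)) / sqrt ((x₁ - x₂)² + (y₁ - y₂)²). Then at any point with (x₁, y₁) ≠ (x₂, y₂), writing R = sqrt((x₁ - x₂)² + (y₁ - y₂)²), Δψ⁻ = ψ₁ - ψ₂ and Δψ⁺ = ψ₁ + ψ₂, the partial derivative of g with respect to x₁ equals -2 * (y₁ - y₂) * sin (Δψ⁻/2) * ((x₁ - x₂) * cos (Δψ⁺/2) + (y₁ - y₂) * sin (Δψ⁺/2)) / R³, and the partial derivative with respect to y₁ equals 2 * (x₁ - x₂) * sin (Δψ⁻/2) * ((x₁ - x₂) * cos (Δψ⁺/2) + (y₁ - y₂) *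 sin (Δψ⁺/2)) / R³. -/
open Real

/-- Gradient of the first-order Lie derivative of the relative range measurement
between two vehicles, in half-angle form. -/
theorem relative_range_lie_derivative_gradient (ψ₁ ψ₂ : ℝ)
    (g : (ℝ × ℝ) × (ℝ × ℝ) → ℝ)
    (hg : ∀ p : (ℝ × ℝ) × (ℝ × ℝ),
      g p = ((p.1.1 - p.2.1) * (Real.cos ψ₁ - Real.cos ψ₂)
              + (p.1.2 - p.2.2) * (Real.sin ψ₁ - Real.sin ψ₂)) /
        Real.sqrt ((p.1.1 - p.2.1) ^ 2 + (p.1.2 - p.2.2) ^ 2))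
    (x₁ y₁ x₂ y₂ : ℝ) (hne : (x₁, y₁) ≠ (x₂, y₂)) :
    DifferentiableAt ℝ g ((x₁, y₁), (x₂, y₂)) ∧
    fderiv ℝ g ((x₁, y₁), (x₂, y₂)) ((1, 0), (0, 0))
      = -2 * (y₁ - y₂) * Real.sin ((ψ₁ - ψ₂) / 2) *
          ((x₁ - x₂) * Real.cos ((ψ₁ + ψ₂) / 2)
            + (y₁ - y₂) * Real.sin ((ψ₁ + ψ₂) / 2)) /
          (Real.sqrt ((x₁ - x₂) ^ 2 + (y₁ - y₂) ^ 2)) ^ 3 ∧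
    fderiv ℝ g ((x₁, y₁), (x₂, y₂)) ((0, 1), (0, 0))
      = 2 * (x₁ - x₂) * Real.sin ((ψ₁ - ψ₂) / 2) *
          ((x₁ - x₂) * Real.cos ((ψ₁ + ψ₂) / 2)
            + (y₁ - y₂) * Real.sin ((ψ₁ + ψ₂) / 2)) /
          (Real.sqrt ((x₁ - x₂) ^ 2 + (y₁ - y₂) ^ 2)) ^ 3 := by
  have hxy : x₁ ≠ x₂ ∨ y₁ ≠ y₂ := by
    by_contra h
    push_neg at h
    exact hne (by simp [h.1, h.2])
  have hQpos : 0 < (x₁ - x₂) ^ 2 + (y₁ - y₂) ^ 2 := by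
    rcases hxy with h | h
    · have : x₁ - x₂ ≠ 0 := sub_ne_zero.2 h
      positivity
    · have : y₁ - y₂ ≠ 0 := sub_ne_zero.2 h
      positivity
  set a : ℝ := Real.cos ψ₁ - Real.cos ψ₂ with ha
  set b : ℝ := Real.sin ψ₁ - Real.sin ψ₂ with hb
  set R : ℝ := Real.sqrt ((x₁ - x₂) ^ 2 + (y₁ - y₂) ^ 2) with hRdef
  have hR : 0 < R := Real.sqrt_pos.2 hQpos
  have hRsq : R ^ 2 = (x₁ - x₂) ^ 2 + (y₁ - y₂) ^ 2 := Real.sq_sqrt hQpos.le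
  -- differentiability
  have hq : DifferentiableAt ℝ
      (fun p : (ℝ × ℝ) × (ℝ × ℝ) => (p.1.1 - p.2.1) ^ 2 + (p.1.2 - p.2.2) ^ 2)
      ((x₁, y₁), (x₂, y₂)) := by fun_prop
  have hsq : DifferentiableAt ℝ
      (fun p : (ℝ × ℝ) × (ℝ × ℝ) => Real.sqrt ((p.1.1 - p.2.1) ^ 2 + (p.1.2 - p.2.2) ^ 2))
      ((x₁, y₁), (x₂, y₂)) :=
    hq.sqrt (by simpa using ne_of_gt hQpos)
  have hnum : DifferentiableAt ℝ
      (fun p : (ℝ × ℝ) × (ℝ × ℝ) => (p.1.1 - p.2.1) * a + (p.1.2 - p.2.2) * b)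
      ((x₁, y₁), (x₂, y₂)) := by fun_prop
  have hgeq : g = fun p : (ℝ × ℝ) × (ℝ × ℝ) =>
      ((p.1.1 - p.2.1) * a + (p.1.2 - p.2.2) * b) *
        (Real.sqrt ((p.1.1 - p.2.1) ^ 2 + (p.1.2 - p.2.2) ^ 2))⁻¹ := by
    funext p; rw [hg, div_eq_mul_inv]
  have hdiff : DifferentiableAt ℝ g ((x₁, y₁), (x₂, y₂)) := by
    rw [hgeq]
    exact hnum.mul (hsq.inv (by simpa [hRdef] using ne_of_gt hR))
  refine ⟨hdiff, ?_, ?_⟩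
  -- x-direction
  · have hline : HasDerivAt (fun t : ℝ => (((x₁ + t, y₁), (x₂, y₂)) : (ℝ × ℝ) × (ℝ × ℝ)))
        (((1, 0), (0, 0)) : (ℝ × ℝ) × (ℝ × ℝ)) 0 := by
      have h1 : HasDerivAt (fun t : ℝ => x₁ + t) 1 0 := by
        simpa using (hasDerivAt_id (0 : ℝ)).const_add x₁
      exact (h1.prodMk (hasDerivAt_const 0 y₁)).prodMk
        ((hasDerivAt_const 0 x₂).prodMk (hasDerivAt_const 0 y₂))
    have hdiff0 : HasFDerivAt g (fderiv ℝ g ((x₁, y₁), (x₂, y₂))) ((x₁ + 0, y₁), (x₂, y₂)) := by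
      norm_num
      exact hdiff.hasFDerivAt
    have hcomp : HasDerivAt (fun t : ℝ => g ((x₁ + t, y₁), (x₂, y₂)))
        (fderiv ℝ g ((x₁, y₁), (x₂, y₂)) ((1, 0), (0, 0))) 0 :=
      hdiff0.comp_hasDerivAt 0 hline
    have h2 : HasDerivAt (fun t : ℝ => x₁ + t - x₂) 1 0 := by
      simpa using ((hasDerivAt_id (0 : ℝ)).const_add x₁).sub_const x₂
    have hN : HasDerivAt (fun t : ℝ => (x₁ + t - x₂) * a + (y₁ - y₂) * b) a 0 := by
      simpa using (h2.mul_const a).add_const ((y₁ - y₂) * b)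
    have hQt : HasDerivAt (fun t : ℝ => (x₁ + t - x₂) ^ 2 + (y₁ - y₂) ^ 2)
        (2 * (x₁ - x₂)) 0 := by
      have := (h2.pow 2).add_const ((y₁ - y₂) ^ 2)
      norm_num [-hasDerivAt_add_const_iff] at this
      convert this using 1
    have hS : HasDerivAt (fun t : ℝ => Real.sqrt ((x₁ + t - x₂) ^ 2 + (y₁ - y₂) ^ 2))
        (2 * (x₁ - x₂) / (2 * R)) 0 := by
      have := hQt.sqrt (by simpa using ne_of_gt hQpos)
      simpa [hRdef] using this
    have hdiv := hN.div hS (by simpa [hRdef] using ne_of_gt hR)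
    have hfun : (fun t : ℝ => g ((x₁ + t, y₁), (x₂, y₂)))
        = fun t : ℝ => ((x₁ + t - x₂) * a + (y₁ - y₂) * b) /
            Real.sqrt ((x₁ + t - x₂) ^ 2 + (y₁ - y₂) ^ 2) := by
      funext t; rw [hg]
    have hφ : HasDerivAt (fun t : ℝ => g ((x₁ + t, y₁), (x₂, y₂)))
        ((a * R - ((x₁ + 0 - x₂) * a + (y₁ - y₂) * b) * (2 * (x₁ - x₂) / (2 * R))) / R ^ 2)
        0 := by
      rw [hfun]
      simpa [hRdef, Pi.div_def] using hdiv
    have hval := hcomp.unique hφ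
    rw [hval, Real.cos_sub_cos, Real.sin_sub_sin] at *
    norm_num
    field_simp
    linear_combination a * hRsq + (y₁ - y₂) ^ 2 * ha
      - (x₁ - x₂) * (y₁ - y₂) * hb
  -- y-direction
  · have hline : HasDerivAt (fun t : ℝ => (((x₁, y₁ + t), (x₂, y₂)) : (ℝ × ℝ) × (ℝ × ℝ)))
        (((0, 1), (0, 0)) : (ℝ × ℝ) × (ℝ × ℝ)) 0 := by
      have h1 : HasDerivAt (fun t : ℝ => y₁ + t) 1 0 := by
        simpa using (hasDerivAt_id (0 : ℝ)).const_add y₁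
      exact ((hasDerivAt_const 0 x₁).prodMk h1).prodMk
        ((hasDerivAt_const 0 x₂).prodMk (hasDerivAt_const 0 y₂))
    have hdiff0 : HasFDerivAt g (fderiv ℝ g ((x₁, y₁), (x₂, y₂))) ((x₁, y₁ + 0), (x₂, y₂)) := by
      norm_num
      exact hdiff.hasFDerivAt
    have hcomp : HasDerivAt (fun t : ℝ => g ((x₁, y₁ + t), (x₂, y₂)))
        (fderiv ℝ g ((x₁, y₁), (x₂, y₂)) ((0, 1), (0, 0))) 0 :=
      hdiff0.comp_hasDerivAt 0 hline
    have h2 : HasDerivAt (fun t : ℝ => y₁ + t - y₂) 1 0 := by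
      simpa using ((hasDerivAt_id (0 : ℝ)).const_add y₁).sub_const y₂
    have hN : HasDerivAt (fun t : ℝ => (x₁ - x₂) * a + (y₁ + t - y₂) * b) b 0 := by
      simpa using ((h2.mul_const b).const_add ((x₁ - x₂) * a))
    have hQt : HasDerivAt (fun t : ℝ => (x₁ - x₂) ^ 2 + (y₁ + t - y₂) ^ 2)
        (2 * (y₁ - y₂)) 0 := by
      have := (h2.pow 2).const_add ((x₁ - x₂) ^ 2)
      norm_num [-hasDerivAt_const_add_iff] at this
      convert this using 1
    have hS : HasDerivAt (fun t : ℝ => Real.sqrt ((x₁ - x₂) ^ 2 + (y₁ + t - y₂) ^ 2))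
        (2 * (y₁ - y₂) / (2 * R)) 0 := by
      have := hQt.sqrt (by simpa using ne_of_gt hQpos)
      simpa [hRdef] using this
    have hdiv := hN.div hS (by simpa [hRdef] using ne_of_gt hR)
    have hfun : (fun t : ℝ => g ((x₁, y₁ + t), (x₂, y₂)))
        = fun t : ℝ => ((x₁ - x₂) * a + (y₁ + t - y₂) * b) /
            Real.sqrt ((x₁ - x₂) ^ 2 + (y₁ + t - y₂) ^ 2) := by
      funext t; rw [hg]
    have hφ : HasDerivAt (fun t : ℝ => g ((x₁, y₁ + t), (x₂, y₂)))
        ((b * R - ((x₁ - x₂) * a + (y₁ + 0 - y₂) * b) * (2 * (y₁ - y₂) / (2 * R))) / R ^ 2)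
        0 := by
      rw [hfun]
      simpa [hRdef, Pi.div_def] using hdiv
    have hval := hcomp.unique hφ
    rw [hval, Real.cos_sub_cos, Real.sin_sub_sin] at *
    norm_num
    field_simp
    linear_combination b * hRsq + (x₁ - x₂) ^ 2 * hb
      - (x₁ - x₂) * (y₁ - y₂) * ha
end
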